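/- With K₃ defined as above (from Qf^∞ satisfying Qf^∞(q,z) ≤ β|z| and with a surface density g satisfying g(λ,θ,ν) ≤ C(1+|λ−θ|)): K₃(a,a,c,d,ν) ≤ C₁ |c−d| for all a ∈ ℝ^m, c,d ∈ ℝ^d, ν ∈ S^{N−1}, for some constant C₁ depending only on β. -/

import Mathlib

open MeasureTheory Filter RealInnerProductSpace

noncomputable section

abbrev Euc (N : ℕ) := EuclideanSpace ℝ (Fin N)
abbrev Vec (m : ℕ) := EuclideanSpace ℝ (Fin m)

/-- The open unit cube centered at the origin. -/
def ccCube (N : ℕ) : Set (Euc N) := {x | ∀ i, x i ∈ Set.Ioo (-(1:ℝ)/2) (1/2)}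

/-- A frame for `ν ∈ S^{N-1}`: a rotation `R` sending a coordinate direction to `ν`,
defining the unit cube `Q_ν = R(Q)` with one direction parallel to `ν`. -/
structure Frame (N : ℕ) where
  R : Euc N ≃ₗᵢ[ℝ] Euc N
  ν : Euc N
  hν : ‖ν‖ = 1
  iν : Fin N
  hR : R (EuclideanSpace.single iν 1) = ν

/-- The rotated unit cube `Q_ν`. -/
def Frame.cube {N : ℕ} (Fr : Frame N) : Set (Euc N) := Fr.R '' ccCube N

/-- The `(N-1)`-dimensional Hausdorff measure on `ℝ^N`. -/
def hm (N : ℕ) : Measure (Euc N) := Measure.hausdorffMeasure ((N : ℝ) - 1)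

/-- Admissible pairs `(v,u) ∈ (SBV₀(Q_ν;ℝ^m) ∩ L^∞) × W^{1,1}(Q_ν;ℝ^d)` for the cell
formula defining `K₃(a,b,c,e,ν)`: `v` is a bounded measurable piecewise-constant-type
function with jump set `J`, traces `vp, vm` and jump normal `νv`, of finite
`H^{N-1}`-jump measure; `u` is differentiable with integrable gradient; `(v,u)` take the
values `(a,c)` and `(b,e)` on the two faces of `Q_ν` orthogonal to `ν`, and are
`1`-periodic in the `N-1` lateral directions. -/
structure AdmPair (N m d : ℕ) (Fr : Frame N) (a b : Vec m) (c e : Fin d → ℝ) where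
  v : Euc N → Vec m
  J : Set (Euc N)
  vp : Euc N → Vec m
  vm : Euc N → Vec m
  νv : Euc N → Euc N
  u : Euc N → Fin d → ℝ
  u' : Euc N → (Euc N →L[ℝ] (Fin d → ℝ))
  hv_meas : Measurable v
  hv_bdd : ∃ M : ℝ, ∀ x, ‖v x‖ ≤ M
  hJ : hm N (J ∩ Fr.cube) < ⊤
  hu : ∀ x, HasFDerivAt u (u' x) x
  hu_int : IntegrableOn (fun x => ‖u' x‖) Fr.cube
  hbc_top : ∀ y : Euc N, (inner ℝ y Fr.ν : ℝ) = 1/2 → v y = a ∧ u y = c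
  hbc_bot : ∀ y : Euc N, (inner ℝ y Fr.ν : ℝ) = -(1/2) → v y = b ∧ u y = e
  hper : ∀ i : Fin N, i ≠ Fr.iν → ∀ y : Euc N,
    v (y + Fr.R (EuclideanSpace.single i 1)) = v y ∧
    u (y + Fr.R (EuclideanSpace.single i 1)) = u y

/-- The gradient of `u` as a `d × N` matrix. -/
def gradOf {N d : ℕ} (D : Euc N →L[ℝ] (Fin d → ℝ)) : Fin d → Fin N → ℝ :=
  fun i j => D (EuclideanSpace.single j 1) i

/-- The energy `∫_{Q_ν} Qf^∞(v,∇u) dx + ∫_{J_v ∩ Q_ν} g(v⁺,v⁻,ν_v) dH^{N-1}`. -/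
def energy {N m d : ℕ} (F : Vec m → (Fin d → Fin N → ℝ) → ℝ)
    (g : Vec m → Vec m → Euc N → ℝ) {Fr : Frame N} {a b : Vec m} {c e : Fin d → ℝ}
    (P : AdmPair N m d Fr a b c e) : ℝ :=
  (∫ x in Fr.cube, F (P.v x) (gradOf (P.u' x))) +
    ∫ x in P.J ∩ Fr.cube, g (P.vp x) (P.vm x) (P.νv x) ∂(hm N)

/-- The cell-formula density `K₃(a,b,c,e,ν)`. -/
def K3 {N m d : ℕ} (F : Vec m → (Fin d → Fin N → ℝ) → ℝ)
    (g : Vec m → Vec m → Euc N → ℝ) (Fr : Frame N) (a b : Vec m) (c e : Fin d → ℝ) : ℝ :=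
  sInf {r : ℝ | ∃ P : AdmPair N m d Fr a b c e, energy F g P = r}

lemma ccCube_eq (N : ℕ) : ccCube N =
    ((MeasurableEquiv.toLp 2 (Fin N → ℝ)).symm) ⁻¹' (Set.univ.pi fun _ => Set.Ioo (-(1:ℝ)/2) (1/2)) := by
  ext x; simp [ccCube, Set.mem_pi, MeasurableEquiv.toLp]; exact Iff.rfl

lemma vol_ccCube (N : ℕ) : volume (ccCube N) = 1 := by
  rw [ccCube_eq, (EuclideanSpace.volume_preserving_symm_measurableEquiv_toLp (Fin N)).measure_preimage
    (MeasurableSet.univ_pi fun _ => measurableSet_Ioo).nullMeasurableSet, volume_pi_pi]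
  norm_num

lemma vol_cube {N : ℕ} (Fr : Frame N) : volume Fr.cube = 1 := by
  have hms : MeasurableSet (ccCube N) := by
    rw [ccCube_eq]
    exact (MeasurableEquiv.toLp 2 (Fin N → ℝ)).symm.measurable
      (MeasurableSet.univ_pi fun _ => measurableSet_Ioo)
  have himg : ⇑Fr.R '' ccCube N = ⇑Fr.R.symm ⁻¹' ccCube N :=
    congrFun (Set.image_eq_preimage_of_inverse Fr.R.symm_apply_apply Fr.R.apply_symm_apply) _
  rw [Frame.cube, himg,
    Fr.R.symm.measurePreserving.measure_preimage hms.nullMeasurableSet, vol_ccCube]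

/-- with `0 ≤ Qf^∞(q,z) ≤ β|z|` and `0 ≤ g(λ,θ,ν) ≤ C(1+|λ−θ|)`, one has
`K₃(a,a,c,d,ν) ≤ C₁ |c−d|` for some constant `C₁ > 0` depending only on `β`. -/
theorem K3_diag_first {N m d : ℕ} (β C : ℝ) (hβ : 0 < β) (hC : 0 < C)
    (F : Vec m → (Fin d → Fin N → ℝ) → ℝ) (g : Vec m → Vec m → Euc N → ℝ)
    (hF0 : ∀ q z, 0 ≤ F q z) (hF : ∀ q z, F q z ≤ β * ‖z‖)
    (hg0 : ∀ l t n, 0 ≤ g l t n)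
    (hg2 : ∀ l t n, g l t n ≤ C * (1 + ‖l - t‖)) :
    ∃ C₁ > (0:ℝ), ∀ (Fr : Frame N) (a : Vec m) (c e : Fin d → ℝ),
      K3 F g Fr a a c e ≤ C₁ * ‖c - e‖ := by
  refine ⟨β, hβ, fun Fr a c e => ?_⟩
  set L : Euc N →L[ℝ] (Fin d → ℝ) := (innerSL ℝ Fr.ν).smulRight (c - e) with hL
  have hLy : ∀ y : Euc N, L y = (inner ℝ y Fr.ν : ℝ) • (c - e) := by
    intro y
    simp only [hL, ContinuousLinearMap.smulRight_apply, innerSL_apply_apply, real_inner_comm]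
  -- the admissible pair
  set P : AdmPair N m d Fr a a c e :=
    { v := fun _ => a
      J := ∅
      vp := fun _ => 0
      vm := fun _ => 0
      νv := fun _ => 0
      u := fun y => (e + (1/2 : ℝ) • (c - e)) + L y
      u' := fun _ => L
      hv_meas := measurable_const
      hv_bdd := ⟨‖a‖, fun _ => le_rfl⟩
      hJ := by
        rw [Set.empty_inter, measure_empty]
        exact ENNReal.zero_lt_top
      hu := fun x => L.hasFDerivAt.const_add _
      hu_int := by
        refine integrableOn_const ?_
        rw [vol_cube Fr]; exact ENNReal.one_ne_top
      hbc_top := by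
        intro y hy
        refine ⟨rfl, ?_⟩
        show e + (1/2 : ℝ) • (c - e) + L y = c
        rw [hLy, hy]
        module
      hbc_bot := by
        intro y hy
        refine ⟨rfl, ?_⟩
        show e + (1/2 : ℝ) • (c - e) + L y = e
        rw [hLy, hy]
        module
      hper := by
        intro i hi y
        refine ⟨rfl, ?_⟩
        have h0 : (inner ℝ (Fr.R (EuclideanSpace.single i 1)) Fr.ν : ℝ) = 0 := by
          rw [← Fr.hR, Fr.R.inner_map_map, EuclideanSpace.inner_single_left]
          simp [EuclideanSpace.single_apply, hi]
        have : L (y + Fr.R (EuclideanSpace.single i 1)) = L y := by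
          rw [map_add, hLy (Fr.R (EuclideanSpace.single i 1)), h0, zero_smul, add_zero]
        simp only [this] } with hP
  -- bound on the gradient
  have hzb : ‖gradOf L‖ ≤ ‖c - e‖ := by
    rw [pi_norm_le_iff_of_nonneg (norm_nonneg _)]
    intro i
    rw [pi_norm_le_iff_of_nonneg (norm_nonneg _)]
    intro j
    have h1 : gradOf L i j = (Fr.ν j) * (c - e) i := by
      simp [gradOf, hL, EuclideanSpace.inner_single_right]
    rw [Real.norm_eq_abs, h1, abs_mul]
    have h2 : |Fr.ν j| ≤ 1 := by
      have h3 := abs_real_inner_le_norm (EuclideanSpace.single j (1:ℝ)) Fr.ν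
      rwa [EuclideanSpace.inner_single_left, EuclideanSpace.norm_single, Fr.hν,
        norm_one, one_mul, map_one, one_mul] at h3
    calc |Fr.ν j| * |(c - e) i| ≤ 1 * |(c - e) i| :=
          mul_le_mul_of_nonneg_right h2 (abs_nonneg _)
      _ = ‖(c - e) i‖ := by rw [one_mul, Real.norm_eq_abs]
      _ ≤ ‖c - e‖ := norm_le_pi_norm (c - e) i
  -- the energy of P
  have hE : energy F g P ≤ β * ‖c - e‖ := by
    have h2 : (∫ x in P.J ∩ Fr.cube, g (P.vp x) (P.vm x) (P.νv x) ∂(hm N)) = 0 := by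
      have : P.J = (∅ : Set (Euc N)) := rfl
      rw [this, Set.empty_inter, Measure.restrict_empty, integral_zero_measure]
    have h1 : (∫ x in Fr.cube, F (P.v x) (gradOf (P.u' x))) = F a (gradOf L) := by
      have : (∫ x in Fr.cube, F (P.v x) (gradOf (P.u' x)))
          = (∫ _x in Fr.cube, F a (gradOf L)) := rfl
      rw [this, setIntegral_const, measureReal_def, vol_cube Fr]
      simp
    rw [energy, h1, h2, add_zero]
    calc F a (gradOf L) ≤ β * ‖gradOf L‖ := hF a _
      _ ≤ β * ‖c - e‖ := mul_le_mul_of_nonneg_left hzb hβ.le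
  -- conclude
  refine le_trans (csInf_le ?_ ⟨P, rfl⟩) hE
  refine ⟨0, fun r hr => ?_⟩
  obtain ⟨Q, rfl⟩ := hr
  exact add_nonneg (integral_nonneg fun x => hF0 _ _) (integral_nonneg fun x => hg0 _ _ _)

end
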